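/- The first-order operator 𝒞 given by (P·𝒞)(x) = x P(x) A − P(x) J is symmetric with respect to the weight W^{(ν)}_φ: for all N×N complex matrix polynomials P and Q, ∫₀^∞ (x P(x) A − P(x) J) · W^{(ν)}_φ(x) · Q(x)^* dx = ∫₀^∞ P(x) · W^{(ν)}_φ(x) · (x Q(x) A − Q(x) J)^* dx. -/

import Mathlib

/-!
Statement 1: The first-order operator 𝒞, (P·𝒞)(x) = x P(x) A − P(x) J, is symmetric with
respect to the weight `W^{(ν)}_φ`.
-/

open MeasureTheory Matrix Polynomial Filter

attribute [local instance] Matrix.normedAddCommGroup Matrix.normedSpace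

noncomputable section

abbrev MatC (N : ℕ) := Matrix (Fin N) (Fin N) ℂ
abbrev MatPoly (N : ℕ) := Matrix (Fin N) (Fin N) (Polynomial ℂ)

/-- `J = Σ_{k=1}^N k E_{k,k}`. -/
def Jmat (N : ℕ) : MatC N := Matrix.diagonal fun k => ((k : ℕ) + 1 : ℂ)

/-- `A = Σ_{k=1}^{N-1} a_k E_{k+1,k}`. -/
def Amat (N : ℕ) (a : ℕ → ℝ) : MatC N :=
  Matrix.of fun i j => if (i : ℕ) = (j : ℕ) + 1 then ((a ((j : ℕ) + 1) : ℝ) : ℂ) else 0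

/-- evaluation of a matrix polynomial at a real point -/
def pEval {N : ℕ} (P : MatPoly N) (x : ℝ) : MatC N := P.map fun q => q.eval (x : ℂ)

/-- entrywise derivative of a matrix polynomial -/
def pDeriv {N : ℕ} (P : MatPoly N) : MatPoly N := P.map fun q => Polynomial.derivative q

/-- `T^{(ν)}_φ(x) = e^{-φ(x)} Σ_{k=1}^N δ_k x^{ν+k} E_{k,k}`. -/
def Tmat (N : ℕ) (ν : ℝ) (δ : ℕ → ℝ) (φ : ℝ → ℝ) (x : ℝ) : MatC N :=
  Matrix.diagonal fun k =>
    ((Real.exp (-(φ x)) * δ ((k : ℕ) + 1) * x ^ (ν + ((k : ℕ) : ℝ) + 1) : ℝ) : ℂ)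

/-- `W^{(ν)}_φ(x) = e^{xA} T^{(ν)}_φ(x) e^{xA^*}`. -/
def Wmat (N : ℕ) (a : ℕ → ℝ) (ν : ℝ) (δ : ℕ → ℝ) (φ : ℝ → ℝ) (x : ℝ) : MatC N :=
  NormedSpace.exp ((x : ℂ) • Amat N a) * Tmat N ν δ φ x *
    NormedSpace.exp ((x : ℂ) • (Amat N a)ᴴ)

namespace CsymAux

open Nat

lemma Apow_entry (N : ℕ) (a : ℕ → ℝ) :
    ∀ (n : ℕ) (i j : Fin N), (i : ℕ) ≠ (j : ℕ) + n → (Amat N a ^ n) i j = 0 := by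
  intro n
  induction n with
  | zero =>
    intro i j h
    rw [pow_zero]
    exact Matrix.one_apply_ne (by rintro rfl; simp at h)
  | succ n ih =>
    intro i j h
    rw [pow_succ, Matrix.mul_apply]
    apply Finset.sum_eq_zero
    intro k _
    by_cases hk : (k : ℕ) = (j : ℕ) + 1
    · rw [ih i k (by omega), zero_mul]
    · have : Amat N a k j = 0 := by simp [Amat, hk]
      rw [this, mul_zero]

lemma Apow_zero (N : ℕ) (a : ℕ → ℝ) (n : ℕ) (hn : N ≤ n) : Amat N a ^ n = 0 := by
  ext i j
  have hi : (i : ℕ) < N := i.isLt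
  simpa using Apow_entry N a n i j (by omega)

lemma JA (N : ℕ) (a : ℕ → ℝ) :
    Jmat N * Amat N a = Amat N a * Jmat N + Amat N a := by
  ext i j
  simp only [Jmat, Amat, Matrix.diagonal_mul, Matrix.mul_diagonal, Matrix.add_apply,
    Matrix.of_apply]
  split_ifs with h
  · have : ((i : ℕ) : ℂ) = ((j : ℕ) : ℂ) + 1 := by exact_mod_cast congrArg (Nat.cast : ℕ → ℂ) h
    rw [this]; ring
  · ring

lemma JApow (N : ℕ) (a : ℕ → ℝ) (n : ℕ) :
    Jmat N * Amat N a ^ n = Amat N a ^ n * Jmat N + (n : ℂ) • Amat N a ^ n := by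
  induction n with
  | zero => simp
  | succ n ih =>
    rw [pow_succ, ← mul_assoc, ih, add_mul, smul_mul_assoc, mul_assoc, JA, mul_add,
      ← mul_assoc, ← pow_succ]
    push_cast
    rw [add_smul, one_smul]
    abel

lemma exp_eq_finsum (N : ℕ) (a : ℕ → ℝ) (x : ℂ) :
    NormedSpace.exp (x • Amat N a) =
      ∑ n ∈ Finset.range (N + 1), (((n ! : ℂ))⁻¹ * x ^ n) • Amat N a ^ n := by
  rw [NormedSpace.exp_eq_tsum (𝕂 := ℂ)]
  refine (tsum_eq_sum ?_).trans (Finset.sum_congr rfl fun n _ => ?_)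
  · intro n hn
    have hNn : N ≤ n := by
      by_contra hlt
      exact hn (Finset.mem_range.mpr (by omega))
    rw [_root_.smul_pow, Apow_zero N a n hNn, smul_zero, smul_zero]
  · rw [_root_.smul_pow, smul_smul]

lemma sum_shift (N : ℕ) (a : ℕ → ℝ) (x : ℂ) :
    ∑ n ∈ Finset.range (N + 1), ((((n ! : ℂ))⁻¹ * x ^ n) * (n : ℂ)) • Amat N a ^ n =
      ∑ n ∈ Finset.range (N + 1),
        (x * (((n ! : ℂ))⁻¹ * x ^ n)) • (Amat N a * Amat N a ^ n) := by
  simp only [← _root_.pow_succ']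
  rw [Finset.sum_range_succ' (fun n => ((((n ! : ℂ))⁻¹ * x ^ n) * (n : ℂ)) • Amat N a ^ n) N,
    Finset.sum_range_succ]
  have hlast : Amat N a ^ (N + 1) = 0 := Apow_zero N a (N + 1) (by omega)
  rw [hlast]
  simp only [Nat.cast_zero, mul_zero, zero_smul, add_zero, smul_zero]
  refine Finset.sum_congr rfl fun n _ => ?_
  congr 1
  have hfac : ((n + 1)! : ℂ) = ((n : ℂ) + 1) * (n ! : ℂ) := by
    push_cast [Nat.factorial_succ]; ring
  have hne : ((n : ℂ) + 1) ≠ 0 := by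
    exact_mod_cast Nat.cast_add_one_ne_zero (R := ℂ) n
  have hfacne : ((n)! : ℂ) ≠ 0 := by exact_mod_cast Nat.factorial_ne_zero n
  field_simp [hfac]
  rw [Nat.factorial_succ]; push_cast; ring

lemma J_mul_exp (N : ℕ) (a : ℕ → ℝ) (x : ℂ) :
    Jmat N * NormedSpace.exp (x • Amat N a) =
      NormedSpace.exp (x • Amat N a) * Jmat N +
        x • (Amat N a * NormedSpace.exp (x • Amat N a)) := by
  rw [exp_eq_finsum, Finset.mul_sum, Finset.sum_mul, Finset.mul_sum, Finset.smul_sum]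
  simp only [Matrix.mul_smul, Matrix.smul_mul, JApow, smul_add, smul_smul, ← _root_.pow_succ']
  rw [Finset.sum_add_distrib]
  congr 1
  simpa only [← _root_.pow_succ'] using sum_shift N a x

lemma Jmat_conjTranspose (N : ℕ) : (Jmat N)ᴴ = Jmat N := by
  ext i j
  rcases eq_or_ne i j with rfl | h
  · simp [Jmat, Matrix.conjTranspose_apply, Matrix.diagonal_apply_eq, Complex.star_def,
      map_add, Complex.conj_natCast, _root_.map_one]
  · simp [Jmat, Matrix.conjTranspose_apply, Matrix.diagonal_apply_ne, h, h.symm]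

lemma star_ofReal (x : ℝ) : star ((x : ℂ)) = (x : ℂ) := by
  simp [Complex.star_def, Complex.conj_ofReal]

lemma exp_mul_J (N : ℕ) (a : ℕ → ℝ) (x : ℝ) :
    NormedSpace.exp ((x : ℂ) • (Amat N a)ᴴ) * Jmat N =
      Jmat N * NormedSpace.exp ((x : ℂ) • (Amat N a)ᴴ) +
        (x : ℂ) • (NormedSpace.exp ((x : ℂ) • (Amat N a)ᴴ) * (Amat N a)ᴴ) := by
  have hE : NormedSpace.exp ((x : ℂ) • (Amat N a)ᴴ) =
      (NormedSpace.exp ((x : ℂ) • Amat N a))ᴴ := by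
    rw [← Matrix.exp_conjTranspose]
    congr 1
    rw [Matrix.conjTranspose_smul, star_ofReal]
  have h := congrArg Matrix.conjTranspose (J_mul_exp N a (x : ℂ))
  simp only [Matrix.conjTranspose_mul, Matrix.conjTranspose_add, Matrix.conjTranspose_smul,
    Jmat_conjTranspose, star_ofReal] at h
  rw [hE]
  exact h

lemma JT_comm (N : ℕ) (nu : ℝ) (d : ℕ → ℝ) (ph : ℝ → ℝ) (x : ℝ) :
    Jmat N * Tmat N nu d ph x = Tmat N nu d ph x * Jmat N := by
  rw [Jmat, Tmat, Matrix.diagonal_mul_diagonal, Matrix.diagonal_mul_diagonal]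
  exact congrArg Matrix.diagonal (funext fun k => mul_comm _ _)

lemma key (N : ℕ) (a : ℕ → ℝ) (nu : ℝ) (d : ℕ → ℝ) (ph : ℝ → ℝ) (x : ℝ) :
    (x : ℂ) • (Amat N a * Wmat N a nu d ph x) - Jmat N * Wmat N a nu d ph x =
      (x : ℂ) • (Wmat N a nu d ph x * (Amat N a)ᴴ) - Wmat N a nu d ph x * Jmat N := by
  set E := NormedSpace.exp ((x : ℂ) • Amat N a) with hE
  set E' := NormedSpace.exp ((x : ℂ) • (Amat N a)ᴴ) with hE'
  set T := Tmat N nu d ph x with hT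
  set A := Amat N a with hA
  set J := Jmat N with hJ
  have eq1 : J * (E * T * E') = E * (T * J) * E' + (x : ℂ) • (A * (E * T * E')) := by
    rw [← mul_assoc, ← mul_assoc, J_mul_exp N a (x : ℂ), add_mul, add_mul,
      Matrix.smul_mul, Matrix.smul_mul]
    congr 1
    · rw [mul_assoc E J T, ← JT_comm]
    · rw [mul_assoc, mul_assoc, mul_assoc]
  have eq2 : (E * T * E') * J = E * (T * J) * E' + (x : ℂ) • ((E * T * E') * A ᴴ) := by
    rw [mul_assoc (E * T) E' J, exp_mul_J N a x, mul_add, Matrix.mul_smul]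
    congr 1
    · rw [← mul_assoc, mul_assoc E T J]
    · rw [mul_assoc (E * T) E' (Aᴴ)]
  show (x : ℂ) • (A * (E * T * E')) - J * (E * T * E') =
      (x : ℂ) • ((E * T * E') * Aᴴ) - (E * T * E') * J
  rw [eq1, eq2]
  abel

end CsymAux

theorem C_symmetric
    (N : ℕ) (hN : 2 ≤ N) (a : ℕ → ℝ) (ν : ℝ) (hν : 0 < ν)
    (δ : ℕ → ℝ) (hδ : ∀ k, 1 ≤ k → k ≤ N → 0 < δ k)
    (φ : ℝ → ℝ) (hφ : ∀ x ∈ Set.Ici (0 : ℝ), AnalyticAt ℝ φ x)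
    -- boundary condition: `x W(x) R(x) → 0` at both endpoints, for every matrix polynomial `R`
    (hbdry0 : ∀ R : MatPoly N,
      Tendsto (fun x : ℝ => (x : ℂ) • (Wmat N a ν δ φ x * pEval R x))
        (nhdsWithin 0 (Set.Ioi 0)) (nhds 0))
    (hbdryInf : ∀ R : MatPoly N,
      Tendsto (fun x : ℝ => (x : ℂ) • (Wmat N a ν δ φ x * pEval R x)) atTop (nhds 0))
    (P Q : MatPoly N)
    -- absolute convergence of the two displayed integrals
    (hint₁ : @IntegrableOn ℝ (MatC N) _
      (Matrix.normedAddCommGroup : NormedAddCommGroup (MatC N)).toUniformSpace.toTopologicalSpace _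
      (fun x : ℝ => ((x : ℂ) • (pEval P x * Amat N a) - pEval P x * Jmat N) *
        Wmat N a ν δ φ x * (pEval Q x)ᴴ) (Set.Ioi 0) volume)
    (hint₂ : @IntegrableOn ℝ (MatC N) _
      (Matrix.normedAddCommGroup : NormedAddCommGroup (MatC N)).toUniformSpace.toTopologicalSpace _
      (fun x : ℝ => pEval P x * Wmat N a ν δ φ x *
        ((x : ℂ) • (pEval Q x * Amat N a) - pEval Q x * Jmat N)ᴴ) (Set.Ioi 0) volume) :
    (∫ x in Set.Ioi (0 : ℝ),
        ((x : ℂ) • (pEval P x * Amat N a) - pEval P x * Jmat N) *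
          Wmat N a ν δ φ x * (pEval Q x)ᴴ) =
      ∫ x in Set.Ioi (0 : ℝ),
        pEval P x * Wmat N a ν δ φ x *
          ((x : ℂ) • (pEval Q x * Amat N a) - pEval Q x * Jmat N)ᴴ := by
  have hfun : (fun x : ℝ =>
      ((x : ℂ) • (pEval P x * Amat N a) - pEval P x * Jmat N) *
        Wmat N a ν δ φ x * (pEval Q x)ᴴ) =
      fun x : ℝ =>
        pEval P x * Wmat N a ν δ φ x *
          ((x : ℂ) • (pEval Q x * Amat N a) - pEval Q x * Jmat N)ᴴ := by
    funext x
    have hk := CsymAux.key N a ν δ φ x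
    have h := congrArg (fun M => pEval P x * M * (pEval Q x)ᴴ) hk
    rw [Matrix.conjTranspose_sub, Matrix.conjTranspose_smul, Matrix.conjTranspose_mul,
      Matrix.conjTranspose_mul, CsymAux.Jmat_conjTranspose, CsymAux.star_ofReal]
    simp only [Matrix.sub_mul, Matrix.mul_sub, Matrix.smul_mul, Matrix.mul_smul,
      mul_assoc] at h ⊢
    exact h
  rw [hfun]
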